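/- arXiv:2001.11948 — 5 statements merged into one kernel-verified Lean document; each statement's English description precedes it below -/
import Mathlib

section
/- Let G : [0,∞) → ℝ be continuous, and suppose m : [0,∞) → ℝ is continuous and satisfies the Volterra integral equation m(t) = G(t) - ∫_0^t G(t - τ) m(τ) dτ for all t ≥ 0. If G(t) ≤ 0 for all t ≥ 0, then m(t) ≤ 0 for all t ≥ 0. -/
theorem stmt2 (G m : ℝ → ℝ) (hG : Continuous G) (hm : Continuous m)
    (heq : ∀ t, 0 ≤ t → m t = G t - ∫ τ in (0:ℝ)..t, G (t - τ) * m τ)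
    (hGneg : ∀ t, 0 ≤ t → G t ≤ 0) :
    ∀ t, 0 ≤ t → m t ≤ 0 := by
  by_contra h
  push_neg at h
  obtain ⟨T, hT0, hmT⟩ := h
  set S : Set ℝ := {t | t ∈ Set.Icc (0:ℝ) T ∧ 0 < m t} with hSdef
  have hTS : T ∈ S := ⟨⟨hT0, le_refl T⟩, hmT⟩
  have hSne : S.Nonempty := ⟨T, hTS⟩
  have hSbdd : BddBelow S := ⟨0, fun x hx => hx.1.1⟩
  set t1 := sInf S with ht1def
  have ht10 : 0 ≤ t1 := le_csInf hSne (fun x hx => hx.1.1)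
  have ht1T : t1 ≤ T := csInf_le hSbdd hTS
  -- m ≤ 0 on [0, t1)
  have hneg_lt : ∀ s, 0 ≤ s → s < t1 → m s ≤ 0 := by
    intro s hs0 hst
    by_contra hpos; push_neg at hpos
    exact absurd (csInf_le hSbdd ⟨⟨hs0, hst.le.trans ht1T⟩, hpos⟩) (not_le.mpr hst)
  -- m ≤ 0 on [0, t1]
  have hmt1 : m t1 ≤ 0 := by
    rcases eq_or_lt_of_le ht10 with h0 | h0
    · rw [heq t1 ht10, ← h0]
      simp [hGneg 0 le_rfl]
    · have hlim : Filter.Tendsto m (nhdsWithin t1 (Set.Iio t1)) (nhds (m t1)) :=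
        (hm.tendsto t1).mono_left nhdsWithin_le_nhds
      refine le_of_tendsto hlim ?_
      filter_upwards [Ioo_mem_nhdsLT_of_mem (Set.mem_Ioc.2 ⟨h0, le_rfl⟩)] with s hs
      exact hneg_lt s hs.1.le hs.2
  have hneg : ∀ s, 0 ≤ s → s ≤ t1 → m s ≤ 0 := by
    intro s hs0 hst
    rcases lt_or_eq_of_le hst with h | h
    · exact hneg_lt s hs0 h
    · rw [h]; exact hmt1
  have ht1ltT : t1 < T := by
    rcases lt_or_eq_of_le ht1T with h | h
    · exact h
    · exact absurd (h ▸ hmt1) (not_le.mpr hmT)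
  -- bound for G on [0, T]
  obtain ⟨C, hC⟩ := isCompact_Icc.exists_bound_of_continuousOn (s := Set.Icc (0:ℝ) T)
    hG.continuousOn
  set M : ℝ := max C 0 with hMdef
  have hM0 : 0 ≤ M := le_max_right _ _
  have hMb : ∀ y ∈ Set.Icc (0:ℝ) T, -M ≤ G y := by
    intro y hy
    have := hC y hy
    rw [Real.norm_eq_abs] at this
    have := abs_le.1 (this.trans (le_max_left C 0))
    linarith [this.1]
  set δ : ℝ := min (T - t1) (1 / (2 * (M + 1))) with hδdef
  have hδ0 : 0 < δ := by
    apply lt_min (by linarith) (by positivity)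
  have hδT : t1 + δ ≤ T := by
    have := min_le_left (T - t1) (1 / (2 * (M + 1)))
    simp only [← hδdef] at this; linarith
  have hδM : δ * M ≤ 1 / 2 := by
    have h1 : δ ≤ 1 / (2 * (M + 1)) := min_le_right _ _
    have h2 : 0 < 2 * (M + 1) := by linarith
    have h3 : δ * (2 * (M + 1)) ≤ 1 := by
      calc δ * (2 * (M + 1)) ≤ (1 / (2 * (M + 1))) * (2 * (M + 1)) := by
            exact mul_le_mul_of_nonneg_right h1 h2.le
        _ = 1 := by field_simp
    nlinarith
  -- maximum of m on [t1, t1+δ]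
  obtain ⟨a, haI, hA⟩ := isCompact_Icc.exists_isMaxOn
    (Set.nonempty_Icc.2 (by linarith : t1 ≤ t1 + δ)) hm.continuousOn
  set A : ℝ := m a with hAdef
  have hAub : ∀ y ∈ Set.Icc t1 (t1 + δ), m y ≤ A := fun y hy => hA hy
  -- A > 0 : there is a point of S below t1 + δ
  obtain ⟨s, hsS, hslt⟩ := exists_lt_of_csInf_lt hSne (by linarith : sInf S < t1 + δ)
  have hst1 : t1 ≤ s := csInf_le hSbdd hsS
  have hApos : 0 < A := lt_of_lt_of_le hsS.2 (hAub s ⟨hst1, hslt.le⟩)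
  -- basic facts about a
  have ha0 : 0 ≤ a := le_trans ht10 haI.1
  have haT : a ≤ T := le_trans haI.2 hδT
  -- integrability
  have hcont : Continuous (fun τ => G (a - τ) * m τ) :=
    (hG.comp (continuous_const.sub continuous_id)).mul hm
  have hint1 : IntervalIntegrable (fun τ => G (a - τ) * m τ) MeasureTheory.volume 0 t1 :=
    hcont.intervalIntegrable _ _
  have hint2 : IntervalIntegrable (fun τ => G (a - τ) * m τ) MeasureTheory.volume t1 a :=
    hcont.intervalIntegrable _ _
  have hsplit : (∫ τ in (0:ℝ)..a, G (a - τ) * m τ) =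
      (∫ τ in (0:ℝ)..t1, G (a - τ) * m τ) + ∫ τ in t1..a, G (a - τ) * m τ :=
    (intervalIntegral.integral_add_adjacent_intervals hint1 hint2).symm
  -- first integral nonneg
  have hI1 : 0 ≤ ∫ τ in (0:ℝ)..t1, G (a - τ) * m τ := by
    apply intervalIntegral.integral_nonneg ht10
    intro τ hτ
    have haτ0 : 0 ≤ a - τ := by
      have := haI.1; have := hτ.2; linarith
    nlinarith [mul_nonneg (neg_nonneg.2 (hGneg _ haτ0)) (neg_nonneg.2 (hneg τ hτ.1 hτ.2))]
  -- second integral lower bound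
  have hI2 : (a - t1) * (-(M * A)) ≤ ∫ τ in t1..a, G (a - τ) * m τ := by
    have hconst : (∫ _ in t1..a, -(M * A)) = (a - t1) * (-(M * A)) := by
      rw [intervalIntegral.integral_const]; simp [smul_eq_mul]
    rw [← hconst]
    apply intervalIntegral.integral_mono_on haI.1
      (intervalIntegrable_const) hint2
    intro τ hτ
    have haτ : a - τ ∈ Set.Icc (0:ℝ) T := by
      constructor
      · linarith [hτ.2]
      · have := hτ.1; linarith
    have hg1 : -M ≤ G (a - τ) := hMb _ haτ
    have hg2 : G (a - τ) ≤ 0 := hGneg _ haτ.1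
    have hmτA : m τ ≤ A := hAub τ ⟨hτ.1, hτ.2.trans haI.2⟩
    nlinarith [mul_nonneg (neg_nonneg.2 hg2) (sub_nonneg.2 hmτA)]
  -- combine
  have hma : m a = G a - ((∫ τ in (0:ℝ)..t1, G (a - τ) * m τ) + ∫ τ in t1..a, G (a - τ) * m τ) := by
    rw [heq a ha0, hsplit]
  have hGa : G a ≤ 0 := hGneg a ha0
  have hat1 : a - t1 ≤ δ := by linarith [haI.2]
  have : A ≤ (a - t1) * (M * A) := by
    have := hI2; have := hI1
    rw [hma] at hAdef
    nlinarith
  nlinarith [mul_le_mul_of_nonneg_right hat1 (mul_nonneg hM0 hApos.le),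
    mul_le_mul_of_nonneg_right hδM hApos.le]
end

section
/- Let x₁, x₂, x₃ ≥ 0 with x₁ + x₂ + x₃ = 1 and define Y_k(t) = e^{-2 x_k t}(x_k − 1) and γ^{Red}_k(t) = −Y_i(t) − Y_j(t) + Y_k(t) for {i,j,k} = {1,2,3}, i≠j≠k. Then for all i ≠ j and all t ≥ 0, γ^{Red}_i(t) + γ^{Red}_j(t) = 2(1 − x_k) e^{-2 x_k t} ≥ 0, where k is the remaining index. -/
theorem stmt12 (x : Fin 3 → ℝ) (hx : ∀ k, 0 ≤ x k)
    (hsum : x 0 + x 1 + x 2 = 1)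
    (Y : Fin 3 → ℝ → ℝ)
    (hY : ∀ k t, Y k t = Real.exp (-2 * x k * t) * (x k - 1))
    (γ : Fin 3 → ℝ → ℝ)
    (hγ : ∀ i j k : Fin 3, i ≠ j → j ≠ k → i ≠ k → ∀ t,
      γ k t = -(Y i t) - Y j t + Y k t) :
    ∀ i j k : Fin 3, i ≠ j → j ≠ k → i ≠ k → ∀ t, 0 ≤ t →
      γ i t + γ j t = 2 * (1 - x k) * Real.exp (-2 * x k * t) ∧
      0 ≤ 2 * (1 - x k) * Real.exp (-2 * x k * t) := by
  intro i j k hij hjk hik t ht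
  have h1 := hγ j k i hjk (Ne.symm hik) (Ne.symm hij) t
  have h2 := hγ i k j hik hjk.symm hij t
  have hk : x k ≤ 1 := by
    fin_cases k <;> simp_all <;> linarith [hx 0, hx 1, hx 2]
  constructor
  · rw [h1, h2, hY i t, hY j t, hY k t]; ring
  · have := Real.exp_pos (-2 * x k * t)
    nlinarith
end

section
/- For the eternally non-Markovian choice x₁ = x₂ = 1/2, x₃ = 0, the rate γ₃ defined by γ₃(t) = −μ₁(t) − μ₂(t) + μ₃(t), with μ₁(t) = −(x₂+x₃)/(x₂+x₃+e^{2t}x₁), μ₂(t) = −(x₃+x₁)/(x₃+x₁+e^{2t}x₂), μ₃(t) = −(x₁+x₂)/(x₁+x₂+e^{2t}x₃), equals −tanh(t), and hence γ₃(t) < 0 for all t > 0. -/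
theorem stmt13 (x₁ x₂ x₃ : ℝ) (h1 : x₁ = 1/2) (h2 : x₂ = 1/2) (h3 : x₃ = 0)
    (μ₁ μ₂ μ₃ γ₃ : ℝ → ℝ)
    (hμ1 : ∀ t, μ₁ t = -(x₂ + x₃) / (x₂ + x₃ + Real.exp (2*t) * x₁))
    (hμ2 : ∀ t, μ₂ t = -(x₃ + x₁) / (x₃ + x₁ + Real.exp (2*t) * x₂))
    (hμ3 : ∀ t, μ₃ t = -(x₁ + x₂) / (x₁ + x₂ + Real.exp (2*t) * x₃))
    (hγ : ∀ t, γ₃ t = -μ₁ t - μ₂ t + μ₃ t) :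
    (∀ t, γ₃ t = -Real.tanh t) ∧ (∀ t, 0 < t → γ₃ t < 0) := by
  have key : ∀ t, γ₃ t = -Real.tanh t := by
    intro t
    have he : Real.exp (2*t) = Real.exp t * Real.exp t := by
      rw [two_mul, Real.exp_add]
    have hpos : (0:ℝ) < 1/2 + Real.exp (2*t) * (1/2) := by positivity
    have hc : Real.cosh t ≠ 0 := ne_of_gt (Real.cosh_pos t)
    rw [hγ, hμ1, hμ2, hμ3, h1, h2, h3, Real.tanh_eq_sinh_div_cosh,
      Real.sinh_eq, Real.cosh_eq]
    have hexp : Real.exp t ≠ 0 := Real.exp_ne_zero t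
    have hexp' : Real.exp (-t) = (Real.exp t)⁻¹ := Real.exp_neg t
    rw [he, hexp']
    field_simp
    ring
  refine ⟨key, fun t ht => ?_⟩
  rw [key]
  have hs : 0 < Real.sinh t := Real.sinh_pos_iff.mpr ht
  have hc := Real.cosh_pos t
  rw [Real.tanh_eq_sinh_div_cosh]
  have : 0 < Real.sinh t / Real.cosh t := div_pos hs hc
  linarith
end

section
/- On ℂ³ with ladder operators S_+ = E₁₂ + E₂₃ and S_- = E₂₁ + E₃₂ (E_{ij} the matrix units), the self-adjoint superoperator K(ω) = S_- ω S_+ − (1/2)(S_+S_- ω + ω S_+S_-) + S_+ ω S_- − (1/2)(S_-S_+ ω + ω S_-S_+) has eigenvalues (with multiplicity, on a suitable orthonormal basis of 3×3 matrices) {0, −3, −5/2, −5/2, −1, −1, −1, −1/2, −1/2}. -/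
open Matrix

noncomputable def Sp : Matrix (Fin 3) (Fin 3) ℂ := !![0,1,0; 0,0,1; 0,0,0]
noncomputable def Sm : Matrix (Fin 3) (Fin 3) ℂ := !![0,0,0; 1,0,0; 0,1,0]

noncomputable def MB : Fin 9 → Matrix (Fin 3) (Fin 3) ℂ
  | ⟨0,_⟩ => !![1,0,0;0,1,0;0,0,1]
  | ⟨1,_⟩ => !![1,0,0;0,-2,0;0,0,1]
  | ⟨2,_⟩ => !![0,1,0;0,0,-1;0,0,0]
  | ⟨3,_⟩ => !![0,0,0;1,0,0;0,-1,0]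
  | ⟨4,_⟩ => !![0,0,1;0,0,0;0,0,0]
  | ⟨5,_⟩ => !![0,0,0;0,0,0;1,0,0]
  | ⟨6,_⟩ => !![1,0,0;0,0,0;0,0,-1]
  | ⟨7,_⟩ => !![0,1,0;0,0,1;0,0,0]
  | ⟨8,_⟩ => !![0,0,0;1,0,0;0,1,0]

noncomputable def nv : Fin 9 → ℝ
  | ⟨0,_⟩ => 3 | ⟨1,_⟩ => 6 | ⟨2,_⟩ => 2 | ⟨3,_⟩ => 2 | ⟨4,_⟩ => 1
  | ⟨5,_⟩ => 1 | ⟨6,_⟩ => 2 | ⟨7,_⟩ => 2 | ⟨8,_⟩ => 2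

noncomputable def BB : Fin 9 → Matrix (Fin 3) (Fin 3) ℂ :=
  fun i => (((Real.sqrt (nv i) : ℝ) : ℂ))⁻¹ • MB i

lemma hsq (n : ℝ) (hn : 0 ≤ n) : ((Real.sqrt n : ℝ) : ℂ)^2 = (n : ℂ) := by
  norm_cast; rw [Real.sq_sqrt hn]

set_option maxHeartbeats 2000000 in
theorem stmt15 (K : Matrix (Fin 3) (Fin 3) ℂ → Matrix (Fin 3) (Fin 3) ℂ)
    (hK : ∀ ω, K ω = Sm * ω * Sp - ((1:ℂ)/2) • (Sp * Sm * ω + ω * (Sp * Sm)) +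
      Sp * ω * Sm - ((1:ℂ)/2) • (Sm * Sp * ω + ω * (Sm * Sp))) :
    ∃ B : Fin 9 → Matrix (Fin 3) (Fin 3) ℂ,
      (∀ i j, Matrix.trace ((B i)ᴴ * B j) = if i = j then 1 else 0) ∧
      (∀ i, K (B i) =
        (![0, -3, -5/2, -5/2, -1, -1, -1, -1/2, -1/2] i : ℂ) • B i) := by
  have h1 := hsq 1 (by norm_num)
  have h2 := hsq 2 (by norm_num)
  have h3 := hsq 3 (by norm_num)
  have h6 := hsq 6 (by norm_num)
  refine ⟨BB, ?_, ?_⟩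
  · intro i j
    fin_cases i <;> fin_cases j <;>
      simp [BB, MB, nv, Matrix.trace_fin_three, Matrix.mul_apply, Fin.sum_univ_three,
        Matrix.conjTranspose_apply, Complex.conj_ofReal, map_inv₀, Matrix.vecHead,
        Matrix.vecTail] <;>
      ring_nf <;> simp [h1, h2, h3, h6, map_ofNat] <;> norm_num
  · intro i
    rw [hK]
    fin_cases i <;>
    · simp only [BB, MB, nv]
      norm_num [Matrix.smul_of, Matrix.smul_cons, Matrix.smul_empty, Sp, Sm,
        Matrix.mul_fin_three, Matrix.cons_val_zero, Matrix.cons_val_one, Matrix.head_cons, -Matrix.vecCons_inj]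
      funext a b
      fin_cases a <;> fin_cases b <;> norm_num <;> ring
end

section
/- Let γ : [0,∞) → ℝ be continuous and nonnegative, ℓ < 0, and let m^{Red} : [0,∞) → ℝ be the continuous solution of m^{Red}(t) = G(t) − ∫_0^t G(t−τ) m^{Red}(τ)dτ with G(t) = ℓ γ(t) e^{ℓ ∫_0^t γ}. Then m^{Red}(t)/ℓ ≥ 0 for all t ≥ 0. -/
theorem stmt18 (γ : ℝ → ℝ) (hγc : Continuous γ) (hγ : ∀ t, 0 ≤ t → 0 ≤ γ t)
    (ℓ : ℝ) (hℓ : ℓ < 0) (G mRed : ℝ → ℝ) (hmc : Continuous mRed)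
    (hG : ∀ t, G t = ℓ * γ t * Real.exp (ℓ * ∫ τ in (0:ℝ)..t, γ τ))
    (heq : ∀ t, 0 ≤ t → mRed t = G t - ∫ τ in (0:ℝ)..t, G (t - τ) * mRed τ) :
    ∀ t, 0 ≤ t → 0 ≤ mRed t / ℓ := by
  -- continuity of G
  have hprim : Continuous fun t => ∫ τ in (0:ℝ)..t, γ τ :=
    intervalIntegral.continuous_primitive (fun a b => hγc.intervalIntegrable a b) 0
  have hGeq : G = fun t => ℓ * γ t * Real.exp (ℓ * ∫ τ in (0:ℝ)..t, γ τ) := funext hG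
  have hGc : Continuous G := by
    rw [hGeq]
    exact (continuous_const.mul hγc).mul ((continuous_const.mul hprim).rexp)
  have hGnp : ∀ t, 0 ≤ t → G t ≤ 0 := by
    intro t ht
    rw [hG]
    have h1 := hγ t ht
    have h2 := (Real.exp_pos (ℓ * ∫ τ in (0:ℝ)..t, γ τ)).le
    nlinarith [mul_nonneg h1 h2]
  intro T hT
  -- reduce to mRed T ≤ 0
  suffices hm : mRed T ≤ 0 by exact div_nonneg_iff.mpr (Or.inr ⟨hm, hℓ.le⟩)
  set p : ℝ → ℝ := fun t => max (mRed t) 0 with hp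
  have hpc : Continuous p := hmc.max continuous_const
  have hpnn : ∀ t, 0 ≤ p t := fun t => le_max_right _ _
  -- bound on G on [0, T]
  obtain ⟨C, hC⟩ := (isCompact_Icc (a := (0:ℝ)) (b := T)).exists_bound_of_continuousOn
    hGc.continuousOn
  have hC0 : 0 ≤ C := le_trans (norm_nonneg _) (hC 0 ⟨le_refl 0, hT⟩)
  -- key Volterra inequality for p
  have hkey : ∀ t ∈ Set.Icc (0:ℝ) T, p t ≤ C * ∫ τ in (0:ℝ)..t, p τ := by
    rintro t ⟨ht0, htT⟩
    have hintp : 0 ≤ ∫ τ in (0:ℝ)..t, p τ :=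
      intervalIntegral.integral_nonneg ht0 (fun τ _ => hpnn τ)
    have hmono : (∫ τ in (0:ℝ)..t, -(G (t - τ) * mRed τ)) ≤ ∫ τ in (0:ℝ)..t, C * p τ := by
      apply intervalIntegral.integral_mono_on ht0
      · exact (((hGc.comp (continuous_const.sub continuous_id)).mul hmc).neg).intervalIntegrable _ _
      · exact (continuous_const.mul hpc).intervalIntegrable _ _
      · rintro τ ⟨hτ0, hτt⟩
        have h1 : 0 ≤ t - τ := by linarith
        have h2 : G (t - τ) ≤ 0 := hGnp _ h1
        have h3 : ‖G (t - τ)‖ ≤ C := hC _ ⟨h1, by linarith⟩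
        have h4 : -G (t - τ) ≤ C := by
          rw [Real.norm_eq_abs] at h3
          cases abs_le.mp h3 with
          | intro hl hr => linarith
        have h5 : mRed τ ≤ p τ := le_max_left _ _
        have h6 : 0 ≤ p τ := hpnn τ
        nlinarith [mul_nonneg (neg_nonneg.mpr h2) (sub_nonneg.mpr h5),
          mul_nonneg (sub_nonneg.mpr h4) h6]
    have hmle : mRed t ≤ C * ∫ τ in (0:ℝ)..t, p τ := by
      have := heq t ht0
      rw [this]
      have hGt : G t ≤ 0 := hGnp t ht0
      have : (∫ τ in (0:ℝ)..t, C * p τ) = C * ∫ τ in (0:ℝ)..t, p τ :=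
        intervalIntegral.integral_const_mul _ _
      rw [intervalIntegral.integral_neg] at hmono
      linarith [hmono, this ▸ hmono]
    exact max_le hmle (mul_nonneg hC0 hintp)
  -- Grönwall on F = ∫ p
  set F : ℝ → ℝ := fun t => ∫ τ in (0:ℝ)..t, p τ with hF
  have hF' : ∀ t : ℝ, HasDerivAt F (p t) t := fun t =>
    (hpc.integral_hasStrictDerivAt 0 t).hasDerivAt
  have hFnn : ∀ t, 0 ≤ t → 0 ≤ F t := fun t ht =>
    intervalIntegral.integral_nonneg ht (fun τ _ => hpnn τ)
  have hgron : ∀ t ∈ Set.Icc (0:ℝ) T, ‖F t‖ ≤ gronwallBound 0 C 0 (t - 0) := by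
    apply norm_le_gronwallBound_of_norm_deriv_right_le
      (f := F) (f' := p) (δ := 0) (K := C) (ε := 0)
    · exact fun t _ => (hF' t).continuousAt.continuousWithinAt
    · exact fun t _ => (hF' t).hasDerivWithinAt
    · simp [hF, intervalIntegral.integral_same]
    · intro t ht
      have ht' : t ∈ Set.Icc (0:ℝ) T := ⟨ht.1, ht.2.le⟩
      have h1 : p t ≤ C * F t := hkey t ht'
      have h2 : 0 ≤ F t := hFnn t ht.1
      rw [Real.norm_eq_abs, Real.norm_eq_abs, abs_of_nonneg (hpnn t), abs_of_nonneg h2]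
      linarith
  have hFT : F T = 0 := by
    have h := hgron T ⟨hT, le_refl T⟩
    have hgb : gronwallBound 0 C 0 (T - 0) = 0 := by
      rw [gronwallBound_ε0, zero_mul]
    rw [hgb] at h
    have := hFnn T hT
    rw [Real.norm_eq_abs, abs_of_nonneg this] at h
    linarith
  have hpT : p T ≤ 0 := by
    have h1 := hkey T ⟨hT, le_refl T⟩
    have h2 : (∫ τ in (0:ℝ)..T, p τ) = 0 := hFT
    rw [h2, mul_zero] at h1
    exact h1
  exact le_trans (le_max_left _ _) hpT
end
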